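/- Let δ ∈ (0,1), ε₄ = 2B_ref·√(log(1/δ)/(2n)), and define â₋(ε₄) = min_{f ∈ R̂(ε₄)} φ(f) and â₊(ε₄) = max_{f ∈ R̂(ε₄)} φ(f). Let f* ∈ argmin_{f∈ℱ} e_orig(f) be the prediction model that uniquely attains the lowest possible expected loss. If f* satisfies Assumption 2, then P( φ(f*) ∈ [ â₋(ε₄), â₊(ε₄) ] ) ≥ 1 − δ. -/

import Mathlib

open MeasureTheory

open MeasureTheory Real in
lemma aux_mgf_bound {α : Type*} [MeasurableSpace α] (μ : Measure α) [IsProbabilityMeasure μ]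
    (g : α → ℝ) (hg : Measurable g) (B : ℝ) (hB : 0 < B) (hbd : ∀ x, |g x| ≤ B)
    (hmean : ∫ x, g x ∂μ ≤ 0) (t : ℝ) (ht : 0 ≤ t) :
    ∫ x, exp (t * g x) ∂μ ≤ exp (t ^ 2 * B ^ 2 / 2) := by
  have hgint : Integrable g μ :=
    (integrable_const B).mono' hg.aestronglyMeasurable (ae_of_all _ fun x => by
      simpa using hbd x)
  have hint : Integrable (fun x => exp (t * g x)) μ :=
    (integrable_const (exp (t * B))).mono' ((Real.measurable_exp.comp (measurable_const.mul hg)).aestronglyMeasurable) (ae_of_all _ fun x => by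
      rw [Real.norm_eq_abs, abs_of_pos (exp_pos _)]
      exact exp_le_exp.2 (by nlinarith [abs_le.1 (hbd x)])
      )
  have hptwise : ∀ x, exp (t * g x) ≤ cosh (t * B) + (g x / B) * sinh (t * B) := by
    intro x
    have hy := abs_le.1 (hbd x)
    have cv : ConvexOn ℝ Set.univ rexp := convexOn_exp
    have key := cv.2 (Set.mem_univ (-(t * B))) (Set.mem_univ (t * B))
      (show (0:ℝ) ≤ (B - g x) / (2 * B) from div_nonneg (by linarith [hy.2]) (by positivity))
      (show (0:ℝ) ≤ (B + g x) / (2 * B) from div_nonneg (by linarith [hy.1]) (by positivity))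
      (show (B - g x) / (2 * B) + (B + g x) / (2 * B) = 1 by field_simp; ring)
    have h1 : ((B - g x) / (2 * B)) • (-(t * B)) + ((B + g x) / (2 * B)) • (t * B) = t * g x := by
      simp only [smul_eq_mul]
      field_simp
      ring
    rw [h1] at key
    refine key.trans_eq ?_
    simp only [smul_eq_mul]
    rw [Real.cosh_eq, Real.sinh_eq]
    field_simp
    ring
  have hintRHS : Integrable (fun x => cosh (t * B) + (g x / B) * sinh (t * B)) μ :=
    (integrable_const _).add ((hgint.div_const B).mul_const _)
  calc ∫ x, exp (t * g x) ∂μ ≤ ∫ x, (cosh (t * B) + (g x / B) * sinh (t * B)) ∂μ :=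
        integral_mono hint hintRHS hptwise
    _ = cosh (t * B) + ((∫ x, g x ∂μ) / B) * sinh (t * B) := by
        rw [integral_add (integrable_const _) ((hgint.div_const B).mul_const _),
          integral_const, integral_mul_const, integral_div]
        simp
    _ ≤ cosh (t * B) := by
        have h2 : 0 ≤ sinh (t * B) := Real.sinh_nonneg_iff.2 (by positivity)
        nlinarith [div_nonpos_of_nonpos_of_nonneg hmean hB.le]
    _ ≤ exp ((t * B) ^ 2 / 2) := Real.cosh_le_exp_half_sq _
    _ = exp (t ^ 2 * B ^ 2 / 2) := by rw [mul_pow]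

/-- Proposition 3 (finite-sample CI from Rashomon sets, unique minimizer): if
`f*` uniquely minimizes the expected loss over `ℱ` and satisfies Assumption 2,
then with probability at least `1 − δ` the descriptor value `φ(f*)` lies between
the min and max of `φ` over the empirical Rashomon set `R̂(ε₄)`, where
`ε₄ = 2B_ref√(log(1/δ)/(2n))`. -/
theorem stmt_8 {𝒴 𝒳1 𝒳2 : Type*}
    [MeasurableSpace 𝒴] [MeasurableSpace 𝒳1] [MeasurableSpace 𝒳2]
    (D : Measure (𝒴 × 𝒳1 × 𝒳2)) [IsProbabilityMeasure D]
    (F : Set ((𝒳1 × 𝒳2) → 𝒴))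
    (L : ((𝒳1 × 𝒳2) → 𝒴) → (𝒴 × 𝒳1 × 𝒳2) → ℝ)
    (hL : ∀ f z, 0 ≤ L f z)
    (hLmeas : ∀ f ∈ F, Measurable (L f))
    (fref : (𝒳1 × 𝒳2) → 𝒴) (hfref : fref ∈ F)
    (n : ℕ) (hn : 2 ≤ n)
    (P : Measure (Fin n → 𝒴 × 𝒳1 × 𝒳2)) (hP : P = Measure.pi fun _ => D)
    (Bref : ℝ) (hBref : 0 < Bref)
    (δ : ℝ) (hδ : δ ∈ Set.Ioo (0 : ℝ) 1)
    (ε₄ : ℝ) (hε₄ : ε₄ = 2 * Bref * Real.sqrt (Real.log (1 / δ) / (2 * n)))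
    (eorig : ((𝒳1 × 𝒳2) → 𝒴) → ℝ) (heorig : ∀ f, eorig f = ∫ z, L f z ∂D)
    (ehatorig : ((𝒳1 × 𝒳2) → 𝒴) → (Fin n → 𝒴 × 𝒳1 × 𝒳2) → ℝ)
    (hehatorig : ∀ f ω, ehatorig f ω = (∑ i, L f (ω i)) / n)
    (Rhat : ℝ → (Fin n → 𝒴 × 𝒳1 × 𝒳2) → Set ((𝒳1 × 𝒳2) → 𝒴))
    (hRhat : ∀ e ω, Rhat e ω =
      insert fref {f ∈ F | ehatorig f ω ≤ ehatorig fref ω + e})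
    (φ : ((𝒳1 × 𝒳2) → 𝒴) → ℝ)
    -- `f*` uniquely attains the lowest possible expected loss
    (fstar : (𝒳1 × 𝒳2) → 𝒴) (hfstarF : fstar ∈ F)
    (hfstar : ∀ f ∈ F, f ≠ fstar → eorig fstar < eorig f)
    -- Assumption 2 for `f*`
    (hA2 : ∀ z, |L fstar z - L fref z| ≤ Bref)
    -- `â₋(ε₄)` and `â₊(ε₄)`, assumed to be attained
    (aminus aplus : (Fin n → 𝒴 × 𝒳1 × 𝒳2) → ℝ)
    (haminus : ∀ ω, IsLeast (φ '' Rhat ε₄ ω) (aminus ω))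
    (haplus : ∀ ω, IsGreatest (φ '' Rhat ε₄ ω) (aplus ω)) :
    ENNReal.ofReal (1 - δ) ≤
      P {ω | φ fstar ∈ Set.Icc (aminus ω) (aplus ω)} := by
  obtain ⟨hδ0, hδ1⟩ := hδ
  have hn0 : (0:ℝ) < n := by exact_mod_cast Nat.lt_of_lt_of_le Nat.zero_lt_two hn
  set g : (𝒴 × 𝒳1 × 𝒳2) → ℝ := fun z => L fstar z - L fref z with hg_def
  have hgmeas : Measurable g := (hLmeas fstar hfstarF).sub (hLmeas fref hfref)
  have hgbd : ∀ z, |g z| ≤ Bref := hA2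
  have hmean : ∫ z, g z ∂D ≤ 0 := by
    by_cases href : Integrable (L fref) D
    · have hdom : Integrable (fun z => L fref z + Bref) D :=
        href.add (integrable_const Bref)
      have hstar : Integrable (L fstar) D :=
        hdom.mono' (hLmeas fstar hfstarF).aestronglyMeasurable
          (ae_of_all _ fun z => by
            have h := abs_le.1 (hA2 z)
            rw [Real.norm_eq_abs, abs_of_nonneg (hL fstar z)]
            show L fstar z ≤ L fref z + Bref
            linarith)
      rw [hg_def]
      rw [integral_sub hstar href, ← heorig fstar, ← heorig fref]
      by_cases he : fstar = fref
      · simp [he]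
      · have h := hfstar fref hfref (Ne.symm he); linarith
    · have hstar : ¬ Integrable (L fstar) D := by
        intro h
        have hdom : Integrable (fun z => L fstar z + Bref) D :=
          h.add (integrable_const Bref)
        exact href (hdom.mono'
          (hLmeas fref hfref).aestronglyMeasurable
          (ae_of_all _ fun z => by
            have h2 := abs_le.1 (hA2 z)
            rw [Real.norm_eq_abs, abs_of_nonneg (hL fref z)]
            show L fref z ≤ L fstar z + Bref
            linarith))
      have he : fstar = fref := by
        by_contra hne
        have h1 := hfstar fref hfref (Ne.symm hne)
        rw [heorig, heorig, integral_undef hstar, integral_undef href] at h1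
        exact lt_irrefl _ h1
      simp [hg_def, he]
  letI : MeasureSpace (𝒴 × 𝒳1 × 𝒳2) := ⟨D⟩
  haveI : IsProbabilityMeasure (volume : Measure (𝒴 × 𝒳1 × 𝒳2)) :=
    ‹IsProbabilityMeasure D›
  have hvol : P = (volume : Measure (Fin n → 𝒴 × 𝒳1 × 𝒳2)) := by
    rw [hP]; exact (MeasureTheory.volume_pi).symm
  haveI hPprob : IsProbabilityMeasure P := by rw [hP]; infer_instance
  set S : (Fin n → 𝒴 × 𝒳1 × 𝒳2) → ℝ := fun ω => ∑ i, g (ω i) with hS_def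
  have hSmeas : Measurable S :=
    Finset.measurable_sum _ fun i _ => hgmeas.comp (measurable_pi_apply i)
  have hK0 : 0 ≤ Real.log (1 / δ) / (2 * n) := by
    have : 1 ≤ 1 / δ := by rw [le_div_iff₀ hδ0]; linarith
    have := Real.log_nonneg this
    positivity
  have hε₄0 : 0 ≤ ε₄ := by rw [hε₄]; positivity
  set t : ℝ := ε₄ / Bref ^ 2 with ht_def
  have ht0 : 0 ≤ t := div_nonneg hε₄0 (by positivity)
  have hSbd : ∀ ω, S ω ≤ n * Bref := fun ω => by
    calc S ω ≤ ∑ _i : Fin n, Bref :=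
          Finset.sum_le_sum fun i _ => (abs_le.1 (hgbd (ω i))).2
      _ = n * Bref := by simp [mul_comm]
  have hint : Integrable (fun ω => Real.exp (t * S ω)) P :=
    (integrable_const (Real.exp (t * (n * Bref)))).mono'
      ((Real.measurable_exp.comp (measurable_const.mul hSmeas)).aestronglyMeasurable)
      (ae_of_all _ fun ω => by
        rw [Real.norm_eq_abs, abs_of_pos (Real.exp_pos _)]
        exact Real.exp_le_exp.2 (mul_le_mul_of_nonneg_left (hSbd ω) ht0))
  have hmgf : ProbabilityTheory.mgf S P t ≤ Real.exp (t ^ 2 * Bref ^ 2 / 2) ^ n := by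
    have hfact : ProbabilityTheory.mgf S P t = (∫ z, Real.exp (t * g z) ∂D) ^ n := by
      have h0 : ProbabilityTheory.mgf S P t = ∫ ω, Real.exp (t * S ω) ∂P := rfl
      rw [h0, hvol]
      have h1 : ∀ ω : Fin n → 𝒴 × 𝒳1 × 𝒳2,
          Real.exp (t * S ω) = ∏ i, Real.exp (t * g (ω i)) := fun ω => by
        rw [hS_def, Finset.mul_sum, Real.exp_sum]
      simp_rw [h1]
      have h2 := MeasureTheory.integral_fintype_prod_volume_eq_pow (ι := Fin n)
        (fun z => Real.exp (t * g z))
      rw [Fintype.card_fin] at h2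
      exact h2
    rw [hfact]
    have hb := aux_mgf_bound D g hgmeas Bref hBref hgbd hmean t ht0
    have hnn : 0 ≤ ∫ z, Real.exp (t * g z) ∂D :=
      integral_nonneg fun z => (Real.exp_pos _).le
    exact pow_le_pow_left₀ hnn hb n
  have hcher := ProbabilityTheory.measure_ge_le_exp_mul_mgf (μ := P) (X := S)
    ((n : ℝ) * ε₄) ht0 hint
  have hexp_eq : -t * ((n:ℝ) * ε₄) + (n:ℝ) * (t ^ 2 * Bref ^ 2 / 2) = Real.log δ := by
    have hsq : ε₄ ^ 2 = 4 * Bref ^ 2 * (Real.log (1 / δ) / (2 * n)) := by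
      rw [hε₄, mul_pow, Real.sq_sqrt hK0]; ring
    have hlog : Real.log (1 / δ) = - Real.log δ := by rw [one_div, Real.log_inv]
    rw [hlog] at hsq
    have h2 : -t * ((n:ℝ) * ε₄) + (n:ℝ) * (t ^ 2 * Bref ^ 2 / 2)
        = -((n:ℝ) * ε₄ ^ 2 / (2 * Bref ^ 2)) := by
      rw [ht_def]; field_simp; ring
    rw [h2, hsq]; field_simp; ring
  have hbound : (P {ω | (n:ℝ) * ε₄ ≤ S ω}).toReal ≤ δ := by
    refine hcher.trans ?_
    calc Real.exp (-t * ((n:ℝ) * ε₄)) * ProbabilityTheory.mgf S P t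
        ≤ Real.exp (-t * ((n:ℝ) * ε₄)) * Real.exp (t ^ 2 * Bref ^ 2 / 2) ^ n := by
          exact mul_le_mul_of_nonneg_left hmgf (Real.exp_pos _).le
      _ = Real.exp (-t * ((n:ℝ) * ε₄) + (n:ℝ) * (t ^ 2 * Bref ^ 2 / 2)) := by
          rw [← Real.exp_nat_mul, ← Real.exp_add]
      _ = δ := by rw [hexp_eq, Real.exp_log hδ0]
  have hPbad : P {ω | (n:ℝ) * ε₄ ≤ S ω} ≤ ENNReal.ofReal δ :=
    (ENNReal.le_ofReal_iff_toReal_le (measure_ne_top _ _) hδ0.le).2 hbound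
  have hAmeas : MeasurableSet {ω | (n:ℝ) * ε₄ ≤ S ω} :=
    measurableSet_le measurable_const hSmeas
  have hsubset : {ω | (n:ℝ) * ε₄ ≤ S ω}ᶜ ⊆
      {ω | φ fstar ∈ Set.Icc (aminus ω) (aplus ω)} := by
    intro ω hω
    have hSle : S ω ≤ (n:ℝ) * ε₄ := le_of_lt (lt_of_not_ge hω)
    have hmem : fstar ∈ Rhat ε₄ ω := by
      rw [hRhat]
      refine Set.mem_insert_iff.2 (Or.inr ⟨hfstarF, ?_⟩)
      rw [hehatorig, hehatorig]
      have hsum : (∑ i, L fstar (ω i)) ≤ (∑ i, L fref (ω i)) + (n:ℝ) * ε₄ := by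
        have hSeq : S ω = (∑ i, L fstar (ω i)) - ∑ i, L fref (ω i) :=
          Finset.sum_sub_distrib _ _
        linarith
      calc (∑ i, L fstar (ω i)) / (n:ℝ)
          ≤ ((∑ i, L fref (ω i)) + (n:ℝ) * ε₄) / (n:ℝ) :=
            by gcongr
        _ = (∑ i, L fref (ω i)) / (n:ℝ) + ε₄ := by field_simp
    exact ⟨(haminus ω).2 ⟨fstar, hmem, rfl⟩, (haplus ω).2 ⟨fstar, hmem, rfl⟩⟩
  calc ENNReal.ofReal (1 - δ) = 1 - ENNReal.ofReal δ := by
        rw [ENNReal.ofReal_sub 1 hδ0.le, ENNReal.ofReal_one]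
    _ ≤ 1 - P {ω | (n:ℝ) * ε₄ ≤ S ω} := tsub_le_tsub_left hPbad 1
    _ = P ({ω | (n:ℝ) * ε₄ ≤ S ω}ᶜ) := (prob_compl_eq_one_sub hAmeas).symm
    _ ≤ _ := measure_mono hsubset
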